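/- Let (Ω, P) be a probability space, b > 0, ν ≥ 0, and let R : Ω → ℕ be a random variable and (m_i)_{i∈ℕ} a sequence of real-valued random variables, each with P(m_i ≥ x) = 10^{−b x} for all x ≥ 0, such that the family (R, m_0, m_1, …) is mutually independent. Define R_ν(ω) = #{ i < R(ω) : m_i(ω) ≥ ν } and p(ν) = 10^{−b ν}. Then for every z ∈ [0,1], E[ z^{R_ν} ] = E[ (1 + p(ν)(z − 1))^{R} ]. -/

import Mathlib

open MeasureTheory ProbabilityTheory
open scoped Classical

/-- Proposition 4 of the paper: if `R` counts the offsprings, whose magnitudes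
`m_0, m_1, …` are i.i.d. Gutenberg–Richter distributed and independent of `R`, then the
generating function of the number `R_ν` of offsprings with magnitude at least `ν` is
obtained from that of `R` by the substitution `z ↦ 1 + p(ν)(z - 1)`, `p(ν) = 10^{-bν}`. -/
theorem thinned_offspring_pgf_substitution
    {Ω : Type*} [MeasurableSpace Ω] (P : Measure Ω) [IsProbabilityMeasure P]
    (b ν : ℝ) (hb : 0 < b) (hν : 0 ≤ ν)
    (R : Ω → ℕ) (hRmeas : Measurable R)
    (m : ℕ → Ω → ℝ) (hmmeas : ∀ i, Measurable (m i))
    (hlaw : ∀ i, ∀ x ≥ (0 : ℝ),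
      P {ω | x ≤ m i ω} = ENNReal.ofReal ((10 : ℝ) ^ (-(b * x))))
    (hindep : iIndepFun
      (fun o : Option ℕ => (match o with
        | none => fun ω => (R ω : ℝ)
        | some i => m i : Ω → ℝ)) P)
    (z : ℝ) (hz : z ∈ Set.Icc (0 : ℝ) 1) :
    ∫ ω, z ^ ((Finset.range (R ω)).filter (fun i => ν ≤ m i ω)).card ∂P
      = ∫ ω, (1 + (10 : ℝ) ^ (-(b * ν)) * (z - 1)) ^ (R ω) ∂P := by
  obtain ⟨hz0, hz1⟩ := hz
  set p : ℝ := (10 : ℝ) ^ (-(b * ν)) with hpdef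
  have hp0 : 0 < p := Real.rpow_pos_of_pos (by norm_num) _
  have hp1 : p ≤ 1 := Real.rpow_le_one_of_one_le_of_nonpos (by norm_num)
    (by nlinarith)
  set c : ℝ := 1 + p * (z - 1) with hcdef
  have hc0 : 0 ≤ c := by nlinarith
  have hc1 : c ≤ 1 := by nlinarith
  -- the thinning function
  set f : ℝ → ℝ := fun x => if ν ≤ x then z else 1 with hfdef
  have hfmeas : Measurable f :=
    Measurable.ite (measurableSet_le measurable_const measurable_id)
      measurable_const measurable_const
  have hf0 : ∀ x, 0 ≤ f x := by
    intro x; by_cases h : ν ≤ x <;> simp [hfdef, h] <;> linarith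
  have hf1 : ∀ x, f x ≤ 1 := by
    intro x; by_cases h : ν ≤ x <;> simp [hfdef, h, hz1]
  -- the composed independent family
  set F : Option ℕ → Ω → ℝ := fun o => match o with
    | none => fun ω => (R ω : ℝ)
    | some i => fun ω => f (m i ω) with hFdef
  have hFmeas : ∀ o, Measurable (F o) := by
    rintro (_ | i)
    · exact (measurable_from_top : Measurable ((↑) : ℕ → ℝ)).comp hRmeas
    · exact hfmeas.comp (hmmeas i)
  have hFindep : iIndepFun F P := by
    have h := hindep.comp (fun o : Option ℕ => o.elim (id : ℝ → ℝ) (fun _ => f))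
      (by rintro (_ | i); exacts [measurable_id, hfmeas])
    convert h using 1
    funext o; cases o <;> rfl
  -- the single-factor expectation
  have hEf : ∀ i, ∫ ω, f (m i ω) ∂P = c := by
    intro i
    have hs : MeasurableSet {ω | ν ≤ m i ω} :=
      measurableSet_le measurable_const (hmmeas i)
    have heq : (fun ω => f (m i ω))
        = fun ω => 1 + (z - 1) * Set.indicator {ω | ν ≤ m i ω} (1 : Ω → ℝ) ω := by
      funext ω
      by_cases h : ν ≤ m i ω
      · simp only [hfdef, if_pos h, Set.indicator_of_mem (by exact h : ω ∈ {ω | ν ≤ m i ω}),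
          Pi.one_apply]
        ring
      · simp only [hfdef, if_neg h,
          Set.indicator_of_notMem (by exact h : ω ∉ {ω | ν ≤ m i ω}), Pi.one_apply]
        ring
    have hint : Integrable (fun ω => Set.indicator {ω | ν ≤ m i ω} (1 : Ω → ℝ) ω) P :=
      (integrable_const (1:ℝ)).indicator hs
    rw [heq, integral_add (integrable_const 1) (hint.const_mul _), integral_const,
      integral_const_mul, integral_indicator_one hs, measureReal_def, measureReal_def, hlaw i ν hν,
      ENNReal.toReal_ofReal hp0.le]
    simp only [measure_univ, ENNReal.toReal_one, smul_eq_mul, mul_one, hcdef]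
    ring
  -- expectation of products of thinning factors
  have hEprod : ∀ n, ∫ ω, ∏ i ∈ Finset.range n, f (m i ω) ∂P = c ^ n := by
    intro n
    induction n with
    | zero => simp
    | succ n ih =>
      have hni : (some n) ∉ (Finset.range n).image some := by simp
      have hind := hFindep.indepFun_finsetProd_of_notMem hFmeas hni
      have hprodeq : (∏ j ∈ (Finset.range n).image some, F j)
          = fun ω => ∏ i ∈ Finset.range n, f (m i ω) := by
        rw [Finset.prod_image (fun x _ y _ h => Option.some_injective _ h)]
        funext ω
        rw [Finset.prod_apply]
      rw [hprodeq] at hind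
      have hmul := hind.integral_mul_eq_mul_integral
        ((Finset.measurable_prod _ (fun i _ => hFmeas (some i))).aestronglyMeasurable)
        ((hFmeas (some n)).aestronglyMeasurable)
      have h3 : (fun ω => ∏ i ∈ Finset.range (n+1), f (m i ω))
          = (fun ω => ∏ i ∈ Finset.range n, f (m i ω)) * F (some n) := by
        funext ω
        simp only [Pi.mul_apply, Finset.prod_range_succ]
        rfl
      show integral P (fun ω => ∏ i ∈ Finset.range (n+1), f (m i ω)) = c ^ (n+1)
      rw [h3, hmul, ih, hEf n, pow_succ]
  -- measurability of the two integrands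
  have hGmeas : Measurable (fun ω => ∏ i ∈ Finset.range (R ω), f (m i ω)) := by
    have h1 : Measurable (fun q : Ω × ℕ => ∏ i ∈ Finset.range q.2, f (m i q.1)) :=
      measurable_from_prod_countable_left fun n => by
        simpa using Finset.measurable_prod (Finset.range n)
          (fun i _ => hfmeas.comp (hmmeas i))
    exact h1.comp (measurable_id.prodMk hRmeas)
  have hHmeas : Measurable (fun ω => c ^ (R ω)) :=
    (measurable_from_top : Measurable (fun n : ℕ => c ^ n)).comp hRmeas
  -- the pointwise identity with the product
  have hpoint : ∀ ω, z ^ ((Finset.range (R ω)).filter (fun i => ν ≤ m i ω)).card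
      = ∏ i ∈ Finset.range (R ω), f (m i ω) := by
    intro ω
    rw [hfdef]
    rw [Finset.prod_ite (f := fun _ => z) (g := fun _ => (1:ℝ))]
    simp [Finset.prod_const]
  -- integrability
  have hGint : Integrable (fun ω => ∏ i ∈ Finset.range (R ω), f (m i ω)) P := by
    refine Integrable.mono' (integrable_const (1:ℝ)) hGmeas.aestronglyMeasurable
      (Filter.Eventually.of_forall fun ω => ?_)
    rw [Real.norm_eq_abs, abs_of_nonneg (Finset.prod_nonneg fun i _ => hf0 _)]
    exact Finset.prod_le_one (fun i _ => hf0 _) (fun i _ => hf1 _)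
  have hHint : Integrable (fun ω => c ^ (R ω)) P := by
    refine Integrable.mono' (integrable_const (1:ℝ)) hHmeas.aestronglyMeasurable
      (Filter.Eventually.of_forall fun ω => ?_)
    rw [Real.norm_eq_abs, abs_of_nonneg (pow_nonneg hc0 _)]
    exact pow_le_one₀ hc0 hc1
  -- the partition by the value of R
  set s : ℕ → Set Ω := fun n => {ω | R ω = n} with hsdef
  have hsmeas : ∀ n, MeasurableSet (s n) := fun n => hRmeas (measurableSet_singleton n)
  have hsdisj : Pairwise (Function.onFun Disjoint s) := by
    intro i j hij
    simp only [Function.onFun, Set.disjoint_left]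
    rintro ω (hi : R ω = i) (hj : R ω = j)
    exact hij (hi ▸ hj ▸ rfl)
  have hsunion : (⋃ n, s n) = Set.univ := by
    ext ω; simp [hsdef]
  -- independence of the product with the event {R = n}
  have hindRn : ∀ n : ℕ, IndepFun (fun ω => ∏ i ∈ Finset.range n, f (m i ω))
      (fun ω => Set.indicator (s n) (1 : Ω → ℝ) ω) P := by
    intro n
    have hni : (none : Option ℕ) ∉ (Finset.range n).image some := by simp
    have hind := hFindep.indepFun_finsetProd_of_notMem hFmeas hni
    have hprodeq : (∏ j ∈ (Finset.range n).image some, F j)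
        = fun ω => ∏ i ∈ Finset.range n, f (m i ω) := by
      rw [Finset.prod_image (fun x _ y _ h => Option.some_injective _ h)]
      funext ω
      rw [Finset.prod_apply]
    rw [hprodeq] at hind
    have hχ : Measurable (fun x : ℝ => if x = (n : ℝ) then (1:ℝ) else 0) :=
      Measurable.ite (measurableSet_eq_fun measurable_id measurable_const)
        measurable_const measurable_const
    have := hind.comp (measurable_id : Measurable (id : ℝ → ℝ)) hχ
    have hcomp : ((fun x : ℝ => if x = (n : ℝ) then (1:ℝ) else 0) ∘ F none)
        = fun ω => Set.indicator (s n) (1 : Ω → ℝ) ω := by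
      funext ω
      by_cases h : R ω = n
      · simp [Function.comp, hFdef, h, hsdef, Set.indicator_of_mem, Set.mem_setOf_eq]
      · have : ((R ω : ℝ)) ≠ (n : ℝ) := by exact_mod_cast h
        simp [Function.comp, hFdef, this, hsdef, Set.indicator_of_notMem, h]
    rw [hcomp] at this
    exact this
  -- evaluate the set integrals
  have hsetint : ∀ n, ∫ ω in s n, (∏ i ∈ Finset.range (R ω), f (m i ω)) ∂P
      = c ^ n * (P (s n)).toReal := by
    intro n
    have h1 : ∫ ω in s n, (∏ i ∈ Finset.range (R ω), f (m i ω)) ∂P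
        = ∫ ω in s n, (∏ i ∈ Finset.range n, f (m i ω)) ∂P := by
      refine setIntegral_congr_fun (hsmeas n) (fun ω hω => ?_)
      have : R ω = n := hω
      rw [this]
    rw [h1, ← integral_indicator (hsmeas n)]
    have h2 : (fun ω => Set.indicator (s n) (fun ω => ∏ i ∈ Finset.range n, f (m i ω)) ω)
        = (fun ω => ∏ i ∈ Finset.range n, f (m i ω))
          * (fun ω => Set.indicator (s n) (1 : Ω → ℝ) ω) := by
      funext ω
      by_cases h : ω ∈ s n <;>
        simp [Set.indicator_of_mem, Set.indicator_of_notMem, h]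
    show integral P (fun ω => Set.indicator (s n) (fun ω => ∏ i ∈ Finset.range n, f (m i ω)) ω)
        = c ^ n * (P (s n)).toReal
    rw [h2]
    rw [(hindRn n).integral_mul_eq_mul_integral
      ((Finset.measurable_prod _ fun i _ => hfmeas.comp (hmmeas i)).aestronglyMeasurable)
      (((measurable_const.indicator (hsmeas n)) :
        Measurable (fun ω => Set.indicator (s n) (1 : Ω → ℝ) ω)).aestronglyMeasurable)]
    rw [hEprod n, integral_indicator_one (hsmeas n), measureReal_def]
  -- put everything together
  calc ∫ ω, z ^ ((Finset.range (R ω)).filter (fun i => ν ≤ m i ω)).card ∂P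
      = ∫ ω, ∏ i ∈ Finset.range (R ω), f (m i ω) ∂P := by
        exact integral_congr_ae (Filter.Eventually.of_forall hpoint)
    _ = ∫ ω in ⋃ n, s n, ∏ i ∈ Finset.range (R ω), f (m i ω) ∂P := by
        rw [hsunion, Measure.restrict_univ]
    _ = ∑' n, ∫ ω in s n, ∏ i ∈ Finset.range (R ω), f (m i ω) ∂P := by
        exact integral_iUnion hsmeas hsdisj (hsunion ▸ hGint.integrableOn)
    _ = ∑' n, c ^ n * (P (s n)).toReal := by
        exact tsum_congr hsetint
    _ = ∑' n, ∫ ω in s n, c ^ (R ω) ∂P := by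
        refine tsum_congr fun n => ?_
        have : ∫ ω in s n, c ^ (R ω) ∂P = ∫ ω in s n, c ^ n ∂P := by
          refine setIntegral_congr_fun (hsmeas n) (fun ω hω => ?_)
          have : R ω = n := hω
          rw [this]
        rw [this, setIntegral_const, smul_eq_mul, mul_comm, measureReal_def]
    _ = ∫ ω in ⋃ n, s n, c ^ (R ω) ∂P := by
        exact (integral_iUnion hsmeas hsdisj (hsunion ▸ hHint.integrableOn)).symm
    _ = ∫ ω, c ^ (R ω) ∂P := by rw [hsunion, Measure.restrict_univ]
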